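/- arXiv:2007.13636 — 4 statements merged into one kernel-verified Lean document; each statement's English description precedes it below -/
import Mathlib

section
/- For every positive integer n, the sum over all permutations π of {1,...,n} of x^{w(π)} equals the rising factorial (x+1)(x+2)···(x+n-1), where w(π) is defined as follows: scan π = π₁π₂...πₙ left to right, mark π₁, then mark each element smaller than the previously marked element; w(π) is the number of marked elements minus one. -/
open Finset

/-- Auxiliary: scan a list, marking each element smaller than the last marked
element `m`; count the marks. -/
def wAux : ℕ → List ℕ → ℕ
  | _, [] => 0
  | m, a :: l => if a < m then wAux a l + 1 else wAux m l

/-- The weight of a permutation written as a list: the first element is marked,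
then each element smaller than the previously marked element is marked;
the weight is the number of marked elements minus one. -/
def wPerm : List ℕ → ℕ
  | [] => 0
  | a :: l => wAux a l

lemma wAux_map (f : ℕ → ℕ) (hf : ∀ u v, f u < f v ↔ u < v) :
    ∀ (l : List ℕ) (p q : ℕ), (∀ u, f u < p ↔ u < q) → wAux p (l.map f) = wAux q l := by
  intro l
  induction l with
  | nil => intro p q _; simp [wAux]
  | cons a t ih =>
      intro p q h
      simp only [List.map_cons, wAux]
      by_cases hc : a < q
      · rw [if_pos ((h a).2 hc), if_pos hc, ih (f a) a (fun u => hf u a)]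
      · rw [if_neg (fun hl => hc ((h a).1 hl)), if_neg hc, ih p q h]

lemma val_succAbove {n : ℕ} (a : Fin (n + 1)) (j : Fin n) :
    ((a.succAbove j : Fin (n + 1)) : ℕ) = if (j : ℕ) < (a : ℕ) then (j : ℕ) else (j : ℕ) + 1 := by
  rw [Fin.succAbove]
  split_ifs with h1 h2 h3
  · rfl
  · exact absurd h1 (by simpa [Fin.lt_def] using h2)
  · exact absurd (by simpa [Fin.lt_def] using h3) h1
  · rfl

noncomputable def G (x : ℚ) (n k : ℕ) : ℚ :=
  (∏ i ∈ Finset.Ico k n, ((i : ℚ) + 1)) * ∏ i ∈ Finset.range k, (x + i)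

lemma G_aux (x : ℚ) : ∀ k n : ℕ, k ≤ n →
    (k : ℚ) * G x n k = x * ∑ j ∈ Finset.range k, G x n j := by
  intro k
  induction k with
  | zero => intro n _; simp
  | succ k ih =>
      intro n hk
      have hkn : k < n := hk
      rw [Finset.sum_range_succ, mul_add, ← ih n hkn.le]
      have h1 : G x n (k + 1) * ((k : ℚ) + 1) = (x + k) * G x n k := by
        unfold G
        rw [Finset.prod_range_succ,
          Finset.prod_eq_prod_Ico_succ_bot hkn (fun i => ((i : ℚ) + 1))]
        ring
      push_cast
      linarith [h1]

lemma G_top (x : ℚ) (n : ℕ) :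
    G x (n + 1) (n + 1) = x * ∏ i ∈ Finset.range n, (x + 1 + i) := by
  unfold G
  rw [Finset.Ico_self, Finset.prod_empty, one_mul, Finset.prod_range_succ']
  push_cast
  rw [add_zero, mul_comm]
  exact congrArg (x * ·) (Finset.prod_congr rfl fun i _ => by ring)

lemma sumG (x : ℚ) : ∀ n : ℕ,
    ∑ k ∈ Finset.range (n + 1), G x n k = ∏ i ∈ Finset.range n, (x + 1 + i) := by
  intro n
  induction n with
  | zero => simp [G]
  | succ n ih =>
      rw [Finset.sum_range_succ, G_top]
      have h1 : ∀ k ∈ Finset.range (n + 1), G x (n + 1) k = ((n : ℚ) + 1) * G x n k := by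
        intro k hk
        rw [Finset.mem_range] at hk
        unfold G
        rw [Finset.prod_Ico_succ_top (Nat.lt_succ_iff.mp hk)]
        push_cast; ring
      rw [Finset.sum_congr rfl h1, ← Finset.mul_sum, ih, Finset.prod_range_succ]
      push_cast; ring

lemma G_succ (x : ℚ) (n k : ℕ) (hk : k ≤ n + 1) :
    G x (n + 1) k = ((n + 1 - k : ℕ) : ℚ) * G x n k + x * ∑ j ∈ Finset.range k, G x n j := by
  rcases Nat.lt_succ_iff_lt_or_eq.mp (Nat.lt_succ_of_le hk) with h | rfl
  · have hkn : k ≤ n := Nat.lt_succ_iff.mp h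
    rw [← G_aux x k n hkn]
    have h2 : G x (n + 1) k = ((n : ℚ) + 1) * G x n k := by
      unfold G
      rw [Finset.prod_Ico_succ_top hkn]
      push_cast; ring
    have h3 : ((n + 1 - k : ℕ) : ℚ) = (n : ℚ) + 1 - k := by
      have : ((n + 1 - k : ℕ) : ℚ) = ((n+1 : ℕ) : ℚ) - (k : ℚ) :=
        Nat.cast_sub hk
      push_cast at this; linarith
    rw [h2, h3]; ring
  · rw [G_top, Nat.sub_self, Nat.cast_zero, zero_mul, zero_add, sumG]

lemma exists_tau (n : ℕ) (a : Fin (n + 1)) :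
    ∃ τ : Equiv.Perm (Fin n), ∀ v, a.succAbove (τ v) = Equiv.swap 0 a v.succ := by
  have hne : ∀ v : Fin n, Equiv.swap 0 a v.succ ≠ a := by
    intro v h
    have h2 : Equiv.swap 0 a (Equiv.swap 0 a v.succ) = Equiv.swap 0 a a := by rw [h]
    rw [Equiv.swap_apply_self, Equiv.swap_apply_right] at h2
    exact Fin.succ_ne_zero v h2
  choose g hg using fun v => Fin.exists_succAbove_eq (hne v)
  have hinj : Function.Injective g := by
    intro u v h
    have h2 := hg u
    rw [h, hg v] at h2
    exact Fin.succ_injective _ ((Equiv.swap 0 a).injective h2.symm)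
  exact ⟨Equiv.ofBijective g (Finite.injective_iff_bijective.mp hinj), hg⟩

lemma wInnerSum (n : ℕ) (x : ℚ) (a : Fin (n + 1)) (q : ℕ) (hq : q ≤ (a : ℕ))
    (H : ∀ p : ℕ,
      ∑ e : Equiv.Perm (Fin n), x ^ wAux p (List.ofFn fun i => ((e i : Fin n) : ℕ))
        = G x n (min p n)) :
    ∑ e : Equiv.Perm (Fin n),
        x ^ wAux q (List.ofFn fun i => ((Equiv.swap 0 a (e i).succ : Fin (n + 1)) : ℕ))
      = G x n (min q n) := by
  obtain ⟨τ, hτ⟩ := exists_tau n a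
  set f : ℕ → ℕ := fun u => if u < (a : ℕ) then u else u + 1 with hf
  have hmono : ∀ u v, f u < f v ↔ u < v := by
    intro u v; simp only [hf]; split_ifs <;> omega
  have hthr : ∀ u, f u < q ↔ u < q := by
    intro u; simp only [hf]; split_ifs <;> omega
  have step1 : ∀ e : Equiv.Perm (Fin n),
      (List.ofFn fun i => ((Equiv.swap 0 a (e i).succ : Fin (n + 1)) : ℕ))
        = (List.ofFn fun i => (((τ * e) i : Fin n) : ℕ)).map f := by
    intro e
    rw [List.map_ofFn]
    congr 1; funext i
    show ((Equiv.swap 0 a (e i).succ : Fin (n + 1)) : ℕ) = f ((τ (e i) : Fin n) : ℕ)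
    rw [← hτ (e i), val_succAbove]
  calc ∑ e : Equiv.Perm (Fin n),
        x ^ wAux q (List.ofFn fun i => ((Equiv.swap 0 a (e i).succ : Fin (n + 1)) : ℕ))
      = ∑ e : Equiv.Perm (Fin n),
          x ^ wAux q ((List.ofFn fun i => (((τ * e) i : Fin n) : ℕ)).map f) := by
        exact Finset.sum_congr rfl fun e _ => by rw [step1]
    _ = ∑ e : Equiv.Perm (Fin n),
          x ^ wAux q ((List.ofFn fun i => ((e i : Fin n) : ℕ)).map f) :=
        Equiv.sum_comp (Equiv.mulLeft τ)
          (fun e => x ^ wAux q ((List.ofFn fun i => ((e i : Fin n) : ℕ)).map f))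
    _ = ∑ e : Equiv.Perm (Fin n),
          x ^ wAux q (List.ofFn fun i => ((e i : Fin n) : ℕ)) := by
        exact Finset.sum_congr rfl fun e _ => by
          rw [wAux_map f hmono _ q q hthr]
    _ = G x n (min q n) := H q

lemma list_decompose (n : ℕ) (a : Fin (n + 1)) (e : Equiv.Perm (Fin n)) :
    (List.ofFn fun i => ((Equiv.Perm.decomposeFin.symm (a, e) i : Fin (n + 1)) : ℕ))
      = (a : ℕ) :: List.ofFn fun i => ((Equiv.swap 0 a (e i).succ : Fin (n + 1)) : ℕ) := by
  rw [List.ofFn_succ]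
  simp

lemma keyW (x : ℚ) : ∀ n p : ℕ,
    ∑ π : Equiv.Perm (Fin n), x ^ wAux p (List.ofFn fun i => ((π i : Fin n) : ℕ))
      = G x n (min p n) := by
  intro n
  induction n with
  | zero => intro p; simp [wAux, G]
  | succ n ih =>
      intro p
      rw [← Equiv.sum_comp Equiv.Perm.decomposeFin.symm
        (fun π => x ^ wAux p (List.ofFn fun i => ((π i : Fin (n + 1)) : ℕ))),
        Fintype.sum_prod_type]
      have inner_eval : ∀ a : Fin (n + 1),
          (∑ e : Equiv.Perm (Fin n), x ^ wAux p
            (List.ofFn fun i => ((Equiv.Perm.decomposeFin.symm (a, e) i : Fin (n + 1)) : ℕ)))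
          = if (a : ℕ) < p then x * G x n (a : ℕ) else G x n (min p n) := by
        intro a
        have han : (a : ℕ) ≤ n := Nat.lt_succ_iff.mp a.isLt
        simp only [list_decompose, wAux]
        by_cases hc : (a : ℕ) < p
        · simp only [if_pos hc, pow_succ]
          rw [← Finset.sum_mul, wInnerSum n x a (a : ℕ) le_rfl ih, min_eq_left han]
          ring
        · simp only [if_neg hc]
          exact wInnerSum n x a p (Nat.le_of_not_lt hc) ih
      rw [Finset.sum_congr rfl fun a _ => inner_eval a]
      rw [Fin.sum_univ_eq_sum_range
        (fun a => if a < p then x * G x n a else G x n (min p n)) (n + 1)]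
      set k := min p (n + 1) with hkdef
      have hk : k ≤ n + 1 := min_le_right _ _
      have hcong : ∀ a ∈ Finset.range (n + 1),
          (if a < p then x * G x n a else G x n (min p n))
            = (if a < k then x * G x n a else G x n k) := by
        intro a ha
        rw [Finset.mem_range] at ha
        by_cases h : a < p
        · rw [if_pos h, if_pos (lt_min h ha)]
        · rw [if_neg h, if_neg (by omega : ¬ a < k)]
          congr 1
          omega
      rw [Finset.sum_congr rfl hcong, Finset.range_eq_Ico,
        ← Finset.sum_Ico_consecutive _ (Nat.zero_le k) hk]
      have h1 : ∑ a ∈ Finset.Ico 0 k, (if a < k then x * G x n a else G x n k)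
          = x * ∑ j ∈ Finset.range k, G x n j := by
        rw [← Finset.range_eq_Ico, Finset.mul_sum]
        exact Finset.sum_congr rfl fun a ha => by
          rw [if_pos (Finset.mem_range.mp ha)]
      have h2 : ∑ a ∈ Finset.Ico k (n + 1), (if a < k then x * G x n a else G x n k)
          = ((n + 1 - k : ℕ) : ℚ) * G x n k := by
        rw [Finset.sum_congr rfl (fun a ha => if_neg (by
          have := (Finset.mem_Ico.mp ha).1; omega)),
          Finset.sum_const, Nat.card_Ico, nsmul_eq_mul]
      rw [h1, h2, G_succ x n k hk]
      ring

theorem stmt0 (n : ℕ) (hn : 0 < n) (x : ℚ) :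
    ∑ π : Equiv.Perm (Fin n), x ^ wPerm (List.ofFn fun i => ((π i : Fin n) : ℕ)) =
      ∏ i ∈ Finset.range (n - 1), (x + 1 + i) := by
  obtain ⟨m, rfl⟩ : ∃ m, n = m + 1 := ⟨n - 1, (Nat.succ_pred_eq_of_pos hn).symm⟩
  rw [← Equiv.sum_comp Equiv.Perm.decomposeFin.symm
    (fun π => x ^ wPerm (List.ofFn fun i => ((π i : Fin (m + 1)) : ℕ))),
    Fintype.sum_prod_type]
  have inner_eval : ∀ a : Fin (m + 1),
      (∑ e : Equiv.Perm (Fin m), x ^ wPerm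
        (List.ofFn fun i => ((Equiv.Perm.decomposeFin.symm (a, e) i : Fin (m + 1)) : ℕ)))
      = G x m (a : ℕ) := by
    intro a
    have han : (a : ℕ) ≤ m := Nat.lt_succ_iff.mp a.isLt
    simp only [list_decompose, wPerm]
    rw [wInnerSum m x a (a : ℕ) le_rfl (keyW x m), min_eq_left han]
  rw [Finset.sum_congr rfl fun a _ => inner_eval a,
    Fin.sum_univ_eq_sum_range (fun a => G x m a) (m + 1), sumG]
  simp
end

section
/- Define C(n,k,x) := Σ_{j=0}^{min(n,k)} j! · (x+1)^{(j)} · S(n+1, j+1) · S(k+1, j+1), where (x+1)^{(j)} = (x+1)(x+2)···(x+j) is the rising factorial and S denotes Stirling numbers of the second kind. Then for all integers n ≥ 0 and k > 0, C(n,k,x) = C(n,k-1,x) + Σ_{j=1}^{n} binom(n,j) · C(n-j+1, k-1, x) + x · Σ_{j=1}^{n} binom(n,j) · C(n-j, k-1, x), as polynomials in x. -/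
open Finset

/-- Stirling numbers of the second kind. -/
def stirling2 : ℕ → ℕ → ℕ
  | 0, 0 => 1
  | 0, _ + 1 => 0
  | _ + 1, 0 => 0
  | n + 1, k + 1 => (k + 1) * stirling2 n (k + 1) + stirling2 n k

/-- Unsigned Stirling numbers of the first kind. -/
def stirling1 : ℕ → ℕ → ℕ
  | 0, 0 => 1
  | 0, _ + 1 => 0
  | _ + 1, 0 => 0
  | n + 1, k + 1 => n * stirling1 n (k + 1) + stirling1 n k

/-- The Callan polynomial, evaluated at x : ℚ. -/
def callan (n k : ℕ) (x : ℚ) : ℚ :=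
  ∑ j ∈ Finset.range (min n k + 1),
    (j.factorial : ℚ) * (∏ i ∈ Finset.range j, (x + 1 + i)) *
      stirling2 (n + 1) (j + 1) * stirling2 (k + 1) (j + 1)

lemma stirling2_zero_right (n : ℕ) : stirling2 (n+1) 0 = 0 := rfl

lemma stirling2_succ (n k : ℕ) :
    stirling2 (n+1) (k+1) = (k + 1) * stirling2 n (k + 1) + stirling2 n k := rfl

lemma stirling2_eq_zero : ∀ {n t : ℕ}, n < t → stirling2 n t = 0 := by
  intro n
  induction n with
  | zero => intro t h; cases t with
    | zero => omega
    | succ t => rfl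
  | succ n ih =>
    intro t h
    cases t with
    | zero => omega
    | succ t =>
      rw [stirling2_succ, ih (by omega), ih (by omega)]
      ring

lemma stirling2_binom (n : ℕ) : ∀ t, stirling2 (n+1) (t+1) = ∑ i ∈ range (n+1), n.choose i * stirling2 i t := by
  induction n with
  | zero => intro t; simp [stirling2_succ, stirling2_eq_zero (Nat.zero_lt_succ t)]
  | succ n ih =>
    intro t
    rw [Finset.sum_range_succ' _ (n+1)]
    have h1 : ∀ i ∈ range (n+1), (n+1).choose (i+1) * stirling2 (i+1) t
        = n.choose i * stirling2 (i+1) t + n.choose (i+1) * stirling2 (i+1) t := by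
      intro i _
      rw [Nat.choose_succ_succ, add_mul]
    rw [Finset.sum_congr rfl h1, Finset.sum_add_distrib]
    have h2 : ∑ i ∈ range (n+1), n.choose (i+1) * stirling2 (i+1) t
        + (n+1).choose 0 * stirling2 0 t = stirling2 (n+1) (t+1) := by
      rw [ih t]
      rw [Finset.sum_range_succ' (fun i => n.choose i * stirling2 i t) n]
      rw [Finset.sum_range_succ (fun i => n.choose (i+1) * stirling2 (i+1) t) n]
      simp [Nat.choose_succ_self]
    cases t with
    | zero =>
      have h3 : ∀ i ∈ range (n+1), n.choose i * stirling2 (i+1) 0 = 0 := by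
        intro i _; rw [stirling2_zero_right]; ring
      rw [Finset.sum_congr rfl h3]
      rw [show n+(1+1) = (n+1)+1 from rfl, stirling2_succ, ← h2, stirling2_zero_right]
      simp
    | succ u =>
      have h3 : ∀ i ∈ range (n+1), n.choose i * stirling2 (i+1) (u+1)
          = (u+1) * (n.choose i * stirling2 i (u+1)) + n.choose i * stirling2 i u := by
        intro i _; rw [stirling2_succ]; ring
      rw [Finset.sum_congr rfl h3, Finset.sum_add_distrib, ← Finset.mul_sum, ← ih u, ← ih (u+1)]
      rw [show n+(1+1) = (n+1)+1 from rfl, stirling2_succ, ← h2]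
      ring

lemma stirling2_binom_shift (n t : ℕ) :
    ∑ i ∈ range (n+1), n.choose i * stirling2 (i+1) t
      = t * stirling2 (n+1) (t+1) + stirling2 (n+1) t := by
  cases t with
  | zero =>
    have h : ∀ i ∈ range (n+1), n.choose i * stirling2 (i+1) 0 = 0 := by
      intro i _; rw [stirling2_zero_right]; ring
    rw [Finset.sum_congr rfl h]
    simp [stirling2_zero_right]
  | succ u =>
    have h : ∀ i ∈ range (n+1), n.choose i * stirling2 (i+1) (u+1)
        = (u+1) * (n.choose i * stirling2 i (u+1)) + n.choose i * stirling2 i u := by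
      intro i _; rw [stirling2_succ]; ring
    rw [Finset.sum_congr rfl h, Finset.sum_add_distrib, ← Finset.mul_sum,
        ← stirling2_binom n u, ← stirling2_binom n (u+1)]

lemma L2b (n j : ℕ) : ∑ i ∈ range (n+1), n.choose i * stirling2 (i+1+1) (j+1)
    = (j+1)*((j+1)*stirling2 (n+1) (j+1+1) + stirling2 (n+1) (j+1))
      + (j*stirling2 (n+1) (j+1) + stirling2 (n+1) j) := by
  have h : ∀ i ∈ range (n+1), n.choose i * stirling2 (i+1+1) (j+1)
      = (j+1)*(n.choose i * stirling2 (i+1) (j+1)) + n.choose i * stirling2 (i+1) j := by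
    intro i _; rw [stirling2_succ]; ring
  rw [Finset.sum_congr rfl h, Finset.sum_add_distrib, ← Finset.mul_sum,
      stirling2_binom_shift, stirling2_binom_shift]

lemma reindex (n : ℕ) (f : ℕ → ℚ) :
    ∑ r ∈ Icc 1 n, (n.choose r : ℚ) * f (n - r) = ∑ i ∈ range n, (n.choose i : ℚ) * f i := by
  apply Finset.sum_nbij' (fun r => n - r) (fun i => n - i)
  · intro a ha; simp only [Finset.mem_Icc] at ha; simp only [Finset.mem_range]; omega
  · intro a ha; simp only [Finset.mem_range] at ha; simp only [Finset.mem_Icc]; omega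
  · intro a ha; simp only [Finset.mem_Icc] at ha; omega
  · intro a ha; simp only [Finset.mem_range] at ha; omega
  · intro a ha
    simp only [Finset.mem_Icc] at ha
    rw [Nat.choose_symm ha.2]

lemma LA (n j : ℕ) :
    ∑ r ∈ Icc 1 n, (n.choose r : ℚ) * stirling2 (n - r + 1) (j+1)
      = ((j:ℚ)+1) * stirling2 (n+1) (j+1+1) := by
  rw [reindex n (fun i => (stirling2 (i+1) (j+1) : ℚ))]
  have h2 : ∑ i ∈ range (n+1), (n.choose i : ℚ) * stirling2 (i+1) (j+1)
      = ((j:ℚ)+1) * stirling2 (n+1) (j+1+1) + stirling2 (n+1) (j+1) := by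
    exact_mod_cast stirling2_binom_shift n (j+1)
  rw [Finset.sum_range_succ, Nat.choose_self] at h2
  push_cast at h2
  linarith

lemma LB (n j : ℕ) :
    ∑ r ∈ Icc 1 n, (n.choose r : ℚ) * stirling2 (n - r + 1 + 1) (j+1)
      = ((j:ℚ)+1)^2 * stirling2 (n+1) (j+1+1) + (j:ℚ) * stirling2 (n+1) (j+1) := by
  rw [reindex n (fun i => (stirling2 (i+1+1) (j+1) : ℚ))]
  have h2 : ∑ i ∈ range (n+1), (n.choose i : ℚ) * stirling2 (i+1+1) (j+1)
      = ((j:ℚ)+1)*(((j:ℚ)+1)*stirling2 (n+1) (j+1+1) + stirling2 (n+1) (j+1))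
        + ((j:ℚ)*stirling2 (n+1) (j+1) + stirling2 (n+1) j) := by
    exact_mod_cast L2b n j
  rw [Finset.sum_range_succ, Nat.choose_self] at h2
  have h3 : (stirling2 (n+1+1) (j+1) : ℚ) = ((j:ℚ)+1)*stirling2 (n+1) (j+1) + stirling2 (n+1) j := by
    exact_mod_cast stirling2_succ (n+1) j
  push_cast at h2
  rw [h3] at h2
  linear_combination h2

lemma callan_ext (n k M : ℕ) (x : ℚ) (h : min n k < M) :
    callan n k x = ∑ j ∈ range M,
      (j.factorial : ℚ) * (∏ i ∈ range j, (x + 1 + i)) *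
        stirling2 (n + 1) (j + 1) * stirling2 (k + 1) (j + 1) := by
  unfold callan
  apply Finset.sum_subset
  · intro a ha; simp only [Finset.mem_range] at ha ⊢; omega
  · intro j hj hj2
    simp only [Finset.mem_range] at hj hj2
    rcases (show n < j ∨ k < j by omega) with h' | h'
    · rw [stirling2_eq_zero (show n+1 < j+1 by omega)]; push_cast; ring
    · rw [stirling2_eq_zero (show k+1 < j+1 by omega)]; push_cast; ring


theorem stmt2 (n k : ℕ) (hk : 0 < k) (x : ℚ) :
    callan n k x =
      callan n (k - 1) x
        + ∑ j ∈ Finset.Icc 1 n, (n.choose j : ℚ) * callan (n - j + 1) (k - 1) x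
        + x * ∑ j ∈ Finset.Icc 1 n, (n.choose j : ℚ) * callan (n - j) (k - 1) x := by
  obtain ⟨m, rfl⟩ : ∃ m, k = m + 1 := ⟨k - 1, by omega⟩
  simp only [Nat.add_sub_cancel]
  rw [callan_ext n (m+1) (n+1) x (by omega), callan_ext n m (n+1) x (by omega)]
  have hA : ∑ r ∈ Icc 1 n, (n.choose r : ℚ) * callan (n - r + 1) m x
      = ∑ j ∈ range (n+1), ∑ r ∈ Icc 1 n, (n.choose r : ℚ) *
        ((j.factorial : ℚ) * (∏ i ∈ range j, (x + 1 + i)) *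
          stirling2 (n - r + 1 + 1) (j + 1) * stirling2 (m + 1) (j + 1)) := by
    rw [Finset.sum_comm]
    apply Finset.sum_congr rfl
    intro r hr
    rw [callan_ext (n - r + 1) m (n+1) x (by simp only [Finset.mem_Icc] at hr; omega),
        Finset.mul_sum]
  have hB : ∑ r ∈ Icc 1 n, (n.choose r : ℚ) * callan (n - r) m x
      = ∑ j ∈ range (n+1), ∑ r ∈ Icc 1 n, (n.choose r : ℚ) *
        ((j.factorial : ℚ) * (∏ i ∈ range j, (x + 1 + i)) *
          stirling2 (n - r + 1) (j + 1) * stirling2 (m + 1) (j + 1)) := by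
    rw [Finset.sum_comm]
    apply Finset.sum_congr rfl
    intro r hr
    rw [callan_ext (n - r) m (n+1) x (by simp only [Finset.mem_Icc] at hr; omega),
        Finset.mul_sum]
  rw [hA, hB]
  -- transform LHS
  have hL : ∀ j ∈ range (n+1),
      (j.factorial : ℚ) * (∏ i ∈ range j, (x + 1 + i)) * stirling2 (n + 1) (j + 1)
        * stirling2 (m + 1 + 1) (j + 1)
      = ((j:ℚ)+1) * ((j.factorial : ℚ) * (∏ i ∈ range j, (x + 1 + i)) *
          stirling2 (n + 1) (j + 1) * stirling2 (m + 1) (j + 1))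
        + (j.factorial : ℚ) * (∏ i ∈ range j, (x + 1 + i)) *
          stirling2 (n + 1) (j + 1) * stirling2 (m + 1) j := by
    intro j _
    have h : (stirling2 (m+1+1) (j+1) : ℚ)
        = ((j:ℚ)+1) * stirling2 (m+1) (j+1) + stirling2 (m+1) j := by
      exact_mod_cast stirling2_succ (m+1) j
    rw [h]; ring
  rw [Finset.sum_congr rfl hL, Finset.sum_add_distrib]
  have hT : ∑ j ∈ range (n+1), (j.factorial : ℚ) * (∏ i ∈ range j, (x + 1 + i)) *
        stirling2 (n + 1) (j + 1) * stirling2 (m + 1) j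
      = ∑ j ∈ range (n+1), ((j+1).factorial : ℚ) * (∏ i ∈ range (j+1), (x + 1 + i)) *
        stirling2 (n + 1) (j + 1 + 1) * stirling2 (m + 1) (j + 1) := by
    rw [Finset.sum_range_succ' _ n, Finset.sum_range_succ _ n,
        stirling2_zero_right, stirling2_eq_zero (show n+1 < n+1+1 by omega)]
    simp
  rw [hT, ← Finset.sum_add_distrib, Finset.mul_sum, ← Finset.sum_add_distrib,
      ← Finset.sum_add_distrib]
  apply Finset.sum_congr rfl
  intro j _
  have e1 : ∑ r ∈ Icc 1 n, (n.choose r : ℚ) *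
        ((j.factorial : ℚ) * (∏ i ∈ range j, (x + 1 + i)) *
          stirling2 (n - r + 1 + 1) (j + 1) * stirling2 (m + 1) (j + 1))
      = ((j.factorial : ℚ) * (∏ i ∈ range j, (x + 1 + i)) * stirling2 (m + 1) (j + 1)) *
        ∑ r ∈ Icc 1 n, (n.choose r : ℚ) * stirling2 (n - r + 1 + 1) (j+1) := by
    rw [Finset.mul_sum]
    apply Finset.sum_congr rfl
    intro r _; ring
  have e2 : x * ∑ r ∈ Icc 1 n, (n.choose r : ℚ) *
        ((j.factorial : ℚ) * (∏ i ∈ range j, (x + 1 + i)) *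
          stirling2 (n - r + 1) (j + 1) * stirling2 (m + 1) (j + 1))
      = (x * ((j.factorial : ℚ) * (∏ i ∈ range j, (x + 1 + i)) * stirling2 (m + 1) (j + 1))) *
        ∑ r ∈ Icc 1 n, (n.choose r : ℚ) * stirling2 (n - r + 1) (j+1) := by
    rw [Finset.mul_sum, Finset.mul_sum]
    apply Finset.sum_congr rfl
    intro r _; ring
  rw [e1, e2, LA n j, LB n j, Finset.prod_range_succ, Nat.factorial_succ]
  push_cast
  ring
end

section
/- For all integers n ≥ 0, m > 0, and j with 0 ≤ j < m, we have Σ_{ℓ=0}^{∞} (-1)^ℓ · c(m+1, ℓ+1) · S(n+ℓ+1, j+1) = 0, where c denotes unsigned Stirling numbers of the first kind and S denotes Stirling numbers of the second kind (the sum is finite since c(m+1, ℓ+1) = 0 for ℓ > m). -/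
open Finset

lemma stirling1_zero_right (n : ℕ) (hn : 0 < n) : stirling1 n 0 = 0 := by
  cases n with
  | zero => omega
  | succ n => rfl

lemma stirling1_eq_zero : ∀ {n k : ℕ}, n < k → stirling1 n k = 0
  | 0, _+1, _ => rfl
  | n+1, k+1, h => by
      show n * stirling1 n (k+1) + stirling1 n k = 0
      rw [stirling1_eq_zero (by omega), stirling1_eq_zero (by omega)]
      simp

lemma neg_one_sub_pow {k i : ℕ} (h : i ≤ k) :
    ((-1:ℤ))^(k-i) = (-1)^k * (-1)^i := by
  have h1 : ((-1:ℤ))^i * (-1)^i = 1 := by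
    rw [← pow_add]; exact Even.neg_one_pow ⟨i, rfl⟩
  calc ((-1:ℤ))^(k-i) = (-1)^(k-i) * ((-1)^i * (-1)^i) := by rw [h1, mul_one]
    _ = (-1)^(k-i+i) * (-1)^i := by rw [pow_add]; ring
    _ = (-1)^k * (-1)^i := by rw [Nat.sub_add_cancel h]

/-- The Stirling-1 generating identity: `∑ (-1)^l c(m+1,l+1) x^l = ∏_{t<m} (t+1-x)`. -/
lemma sumA : ∀ (m : ℕ) (x : ℤ),
    ∑ l ∈ range (m+1), (-1:ℤ)^l * stirling1 (m+1) (l+1) * x^l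
      = ∏ t ∈ range m, ((t:ℤ) + 1 - x) := by
  intro m
  induction m with
  | zero => intro x; simp [stirling1]
  | succ m ih =>
    intro x
    have key : ∀ l : ℕ, (stirling1 (m+2) (l+1) : ℤ)
        = (m+1) * stirling1 (m+1) (l+1) + stirling1 (m+1) l := by
      intro l
      show ((stirling1 ((m+1)+1) (l+1) : ℕ) : ℤ) = _
      rw [show stirling1 ((m+1)+1) (l+1)
          = (m+1) * stirling1 (m+1) (l+1) + stirling1 (m+1) l from rfl]
      push_cast; ring
    calc ∑ l ∈ range (m+2), (-1:ℤ)^l * stirling1 (m+2) (l+1) * x^l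
        = ∑ l ∈ range (m+2), ((m+1) * ((-1:ℤ)^l * stirling1 (m+1) (l+1) * x^l)
            + (-1:ℤ)^l * (stirling1 (m+1) l : ℤ) * x^l) := by
          refine sum_congr rfl fun l _ => ?_
          rw [key l]; ring
      _ = (m+1) * (∑ l ∈ range (m+2), (-1:ℤ)^l * stirling1 (m+1) (l+1) * x^l)
            + ∑ l ∈ range (m+2), (-1:ℤ)^l * (stirling1 (m+1) l : ℤ) * x^l := by
          rw [sum_add_distrib, mul_sum]
      _ = (m+1) * (∑ l ∈ range (m+1), (-1:ℤ)^l * stirling1 (m+1) (l+1) * x^l)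
            + (-x) * (∑ l ∈ range (m+1), (-1:ℤ)^l * stirling1 (m+1) (l+1) * x^l) := by
          congr 1
          · congr 1
            rw [sum_range_succ, stirling1_eq_zero (by omega)]
            simp
          · rw [sum_range_succ', stirling1_zero_right (m+1) (by omega)]
            simp only [Nat.cast_zero, mul_zero, zero_mul, mul_one, add_zero]
            rw [mul_sum]
            refine sum_congr rfl fun l _ => ?_
            ring
      _ = ((m:ℤ) + 1 - x) * ∏ t ∈ range m, ((t:ℤ) + 1 - x) := by rw [ih]; ring
      _ = ∏ t ∈ range (m+1), ((t:ℤ) + 1 - x) := by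
          rw [prod_range_succ]; push_cast; ring

/-- Explicit formula: `k! * S(n,k) = ∑ (-1)^(k-i) C(k,i) i^n`. -/
lemma stirling2_fact : ∀ (n k : ℕ),
    (k.factorial : ℤ) * stirling2 n k
      = ∑ i ∈ range (k+1), (-1:ℤ)^(k-i) * (k.choose i) * (i:ℤ)^n := by
  intro n
  induction n with
  | zero =>
    intro k
    cases k with
    | zero => simp [stirling2]
    | succ k =>
      rw [show stirling2 0 (k+1) = 0 from rfl]
      have : ∑ i ∈ range (k+2), (-1:ℤ)^(k+1-i) * ((k+1).choose i) * (i:ℤ)^0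
          = (-1:ℤ)^(k+1) * ∑ i ∈ range (k+2), (-1:ℤ)^i * ((k+1).choose i) := by
        rw [mul_sum]
        refine sum_congr rfl fun i hi => ?_
        rw [mem_range] at hi
        rw [neg_one_sub_pow (by omega : i ≤ k+1)]
        ring
      rw [this, Int.alternating_sum_range_choose]
      simp
  | succ n ih =>
    intro k
    cases k with
    | zero =>
      simp [stirling2]
    | succ k =>
      have hrec : (stirling2 (n+1) (k+1) : ℤ)
          = (k+1) * stirling2 n (k+1) + stirling2 n k := by
        rw [show stirling2 (n+1) (k+1)
            = (k+1) * stirling2 n (k+1) + stirling2 n k from rfl]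
        push_cast; ring
      have hchoose : ∀ i : ℕ, ((k+1-i : ℕ) : ℤ) * ((k+1).choose i)
          = (k+1) * (k.choose i) := by
        intro i
        have h1 : (k+1) * k.choose i = (k+1).choose (i+1) * (i+1) :=
          Nat.add_one_mul_choose_eq k i
        have h2 : (k+1).choose (i+1) * (i+1) = (k+1).choose i * ((k+1) - i) :=
          Nat.choose_succ_right_eq (k+1) i
        have : (k+1-i) * ((k+1).choose i) = (k+1) * (k.choose i) := by
          rw [h1, h2]; ring
        exact_mod_cast this
      have step : ∑ i ∈ range (k+2), (-1:ℤ)^(k+1-i) * ((k+1).choose i) * (i:ℤ)^(n+1)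
          = (k+1) * (∑ i ∈ range (k+2), (-1:ℤ)^(k+1-i) * ((k+1).choose i) * (i:ℤ)^n)
            - (k+1) * (∑ i ∈ range (k+2), (-1:ℤ)^(k+1-i) * (k.choose i) * (i:ℤ)^n) := by
        rw [mul_sum, mul_sum, ← sum_sub_distrib]
        refine sum_congr rfl fun i hi => ?_
        rw [mem_range] at hi
        have hi' : i ≤ k + 1 := by omega
        have hsplit : (i : ℤ) = ((k:ℤ)+1) - ((k+1-i : ℕ) : ℤ) := by
          push_cast [Nat.cast_sub hi']; ring
        calc (-1:ℤ)^(k+1-i) * ((k+1).choose i) * (i:ℤ)^(n+1)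
            = (-1:ℤ)^(k+1-i) * (((k:ℤ)+1) - ((k+1-i : ℕ) : ℤ)) * ((k+1).choose i) * (i:ℤ)^n := by
              rw [← hsplit]; ring
          _ = (-1:ℤ)^(k+1-i) * (((k:ℤ)+1) * ((k+1).choose i)
                - ((k+1-i : ℕ) : ℤ) * ((k+1).choose i)) * (i:ℤ)^n := by ring
          _ = (-1:ℤ)^(k+1-i) * (((k:ℤ)+1) * ((k+1).choose i)
                - ((k:ℤ)+1) * (k.choose i)) * (i:ℤ)^n := by
              rw [hchoose i]
          _ = ((k:ℤ)+1) * ((-1:ℤ)^(k+1-i) * ((k+1).choose i) * (i:ℤ)^n)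
                - ((k:ℤ)+1) * ((-1:ℤ)^(k+1-i) * (k.choose i) * (i:ℤ)^n) := by ring
      have second : ∑ i ∈ range (k+2), (-1:ℤ)^(k+1-i) * (k.choose i) * (i:ℤ)^n
          = - ∑ i ∈ range (k+1), (-1:ℤ)^(k-i) * (k.choose i) * (i:ℤ)^n := by
        rw [sum_range_succ, Nat.choose_succ_self]
        simp only [Nat.cast_zero, mul_zero, zero_mul, add_zero, mul_one]
        rw [← sum_neg_distrib]
        refine sum_congr rfl fun i hi => ?_
        rw [mem_range] at hi
        have : k + 1 - i = (k - i) + 1 := by omega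
        rw [this, pow_succ]
        ring
      have LHS : ((k+1).factorial : ℤ) * stirling2 (n+1) (k+1)
          = (k+1) * ((((k+1).factorial : ℤ)) * stirling2 n (k+1))
            + (k+1) * ((k.factorial : ℤ) * stirling2 n k) := by
        rw [hrec, Nat.factorial_succ]
        push_cast; ring
      rw [LHS, ih (k+1), ih k, step, second]
      ring

theorem stmt3 (n m j : ℕ) (hm : 0 < m) (hj : j < m) :
    ∑ l ∈ Finset.range (m + 1),
      (-1 : ℤ) ^ l * stirling1 (m + 1) (l + 1) * stirling2 (n + l + 1) (j + 1) = 0 := by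
  have hfact : (((j+1).factorial : ℤ)) ≠ 0 := by
    exact_mod_cast Nat.factorial_ne_zero (j+1)
  have key : ((j+1).factorial : ℤ) *
      (∑ l ∈ Finset.range (m + 1),
        (-1 : ℤ) ^ l * stirling1 (m + 1) (l + 1) * stirling2 (n + l + 1) (j + 1)) = 0 := by
    rw [mul_sum]
    have step1 : ∀ l ∈ range (m+1),
        ((j+1).factorial : ℤ) *
          ((-1 : ℤ) ^ l * stirling1 (m + 1) (l + 1) * stirling2 (n + l + 1) (j + 1))
        = ∑ i ∈ range (j+2), (-1:ℤ)^l * stirling1 (m+1) (l+1) *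
            ((-1:ℤ)^(j+1-i) * ((j+1).choose i) * (i:ℤ)^(n+l+1)) := by
      intro l _
      rw [show ((j+1).factorial : ℤ) *
            ((-1 : ℤ) ^ l * stirling1 (m + 1) (l + 1) * stirling2 (n + l + 1) (j + 1))
          = (-1 : ℤ) ^ l * stirling1 (m + 1) (l + 1) *
            (((j+1).factorial : ℤ) * stirling2 (n + l + 1) (j + 1)) from by ring,
        stirling2_fact, mul_sum]
    rw [sum_congr rfl step1, sum_comm]
    refine sum_eq_zero fun i hi => ?_
    rw [mem_range] at hi
    have inner : ∑ l ∈ range (m+1), (-1:ℤ)^l * stirling1 (m+1) (l+1) *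
          ((-1:ℤ)^(j+1-i) * ((j+1).choose i) * (i:ℤ)^(n+l+1))
        = (-1:ℤ)^(j+1-i) * ((j+1).choose i) * (i:ℤ)^(n+1) *
          ∑ l ∈ range (m+1), (-1:ℤ)^l * stirling1 (m+1) (l+1) * (i:ℤ)^l := by
      rw [mul_sum]
      refine sum_congr rfl fun l _ => ?_
      rw [show n + l + 1 = (n+1) + l from by omega, pow_add]
      ring
    rw [inner, sumA m (i:ℤ)]
    rcases Nat.eq_zero_or_pos i with h0 | hpos
    · subst h0
      simp
    · have hz : ∏ t ∈ range m, ((t:ℤ) + 1 - (i:ℤ)) = 0 := by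
        refine prod_eq_zero (mem_range.mpr (show i - 1 < m by omega)) ?_
        push_cast [Nat.cast_sub (by omega : 1 ≤ i)]
        ring
      rw [hz, mul_zero]
  exact (mul_eq_zero.mp key).resolve_left hfact
end

section
/- Define B(n,k) := Σ_{j=0}^{min(n,k)} (j!)² · S(n+1, j+1) · S(k+1, j+1) (the poly-Bernoulli number B_n^{(-k)}). Then for all integers n ≥ 0 and k ≥ 0, Σ_{ℓ=0}^{n} c(n+1, ℓ+1) · B(ℓ, k) = n! · Σ_{i=1}^{n+1} i^k. -/
open Finset

/-- The poly-Bernoulli number B_n^{(-k)}. -/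
def polyBernoulli (n k : ℕ) : ℕ :=
  ∑ j ∈ Finset.range (min n k + 1),
    j.factorial ^ 2 * stirling2 (n + 1) (j + 1) * stirling2 (k + 1) (j + 1)

lemma s2_zero : ∀ n k, n < k → stirling2 n k = 0 := by
  intro n
  induction n with
  | zero =>
    intro k h
    match k, h with
    | k + 1, _ => rfl
  | succ n ih =>
    intro k h
    match k, h with
    | k + 1, h =>
      show (k + 1) * stirling2 n (k + 1) + stirling2 n k = 0
      rw [ih (k + 1) (by omega), ih k (by omega)]
      ring

lemma s1_zero : ∀ n k, n < k → stirling1 n k = 0 := by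
  intro n
  induction n with
  | zero =>
    intro k h
    match k, h with
    | k + 1, _ => rfl
  | succ n ih =>
    intro k h
    match k, h with
    | k + 1, h =>
      show n * stirling1 n (k + 1) + stirling1 n k = 0
      rw [ih (k + 1) (by omega), ih k (by omega)]
      ring

lemma s2_zero0 (n : ℕ) : stirling2 (n + 1) 0 = 0 := rfl

lemma s1_zero0 (n : ℕ) : stirling1 (n + 1) 0 = 0 := rfl

lemma desc_mul (x j : ℕ) :
    x * x.descFactorial j = x.descFactorial (j + 1) + j * x.descFactorial j := by
  rcases le_or_gt j x with h | h
  · rw [Nat.descFactorial_succ, ← add_mul, Nat.sub_add_cancel h]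
  · rw [Nat.descFactorial_eq_zero_iff_lt.mpr h,
      Nat.descFactorial_eq_zero_iff_lt.mpr (by omega)]
    ring

lemma s2_desc : ∀ N x : ℕ, ∑ j ∈ range (N + 1), stirling2 N j * x.descFactorial j = x ^ N := by
  intro N
  induction N with
  | zero => intro x; simp [stirling2]
  | succ N ih =>
    intro x
    rw [Finset.sum_range_succ', s2_zero0]
    simp only [zero_mul, add_zero]
    have e1 : ∀ j, stirling2 (N + 1) (j + 1) = (j + 1) * stirling2 N (j + 1) + stirling2 N j :=
      fun j => rfl
    calc ∑ j ∈ range (N + 1), stirling2 (N + 1) (j + 1) * x.descFactorial (j + 1)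
        = (∑ j ∈ range (N + 1), (j + 1) * stirling2 N (j + 1) * x.descFactorial (j + 1)) +
          ∑ j ∈ range (N + 1), stirling2 N j * x.descFactorial (j + 1) := by
          rw [← Finset.sum_add_distrib]
          refine Finset.sum_congr rfl fun j _ => ?_
          rw [e1 j]; ring
      _ = (∑ j ∈ range (N + 1), j * stirling2 N j * x.descFactorial j) +
          ∑ j ∈ range (N + 1), stirling2 N j * x.descFactorial (j + 1) := by
          congr 1
          rw [Finset.sum_range_succ' (fun j => j * stirling2 N j * x.descFactorial j)]
          rw [Finset.sum_range_succ (fun j => (j + 1) * stirling2 N (j + 1) * x.descFactorial (j + 1))]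
          rw [s2_zero N (N + 1) (by omega)]
          simp
      _ = ∑ j ∈ range (N + 1), stirling2 N j * (x * x.descFactorial j) := by
          rw [← Finset.sum_add_distrib]
          refine Finset.sum_congr rfl fun j _ => ?_
          rw [desc_mul]; ring
      _ = x * ∑ j ∈ range (N + 1), stirling2 N j * x.descFactorial j := by
          rw [Finset.mul_sum]
          exact Finset.sum_congr rfl fun j _ => by ring
      _ = x ^ (N + 1) := by rw [ih x]; ring

example : True := trivial

lemma hockey (j : ℕ) : ∀ n : ℕ,
    (j + 1) * ∑ m ∈ range (n + 1), m.descFactorial j = (n + 1).descFactorial (j + 1) := by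
  intro n
  induction n with
  | zero =>
    cases j with
    | zero => simp
    | succ j => simp [Nat.descFactorial_eq_zero_iff_lt.mpr (by omega : (0:ℕ) < j + 1),
        Nat.descFactorial_succ]
  | succ n ih =>
    rw [Finset.sum_range_succ, Nat.mul_add, ih, Nat.descFactorial_succ,
      Nat.succ_descFactorial_succ]
    rcases le_or_gt j (n + 1) with h | h
    · rw [← add_mul]
      congr 1
      omega
    · rw [Nat.descFactorial_eq_zero_iff_lt.mpr h]
      simp

lemma claimB : ∀ n j : ℕ,
    j.factorial ^ 2 * ∑ l ∈ range (n + 1), stirling1 (n + 1) (l + 1) * stirling2 (l + 1) (j + 1)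
      = n.factorial * ∑ m ∈ range (n + 1), m.descFactorial j := by
  intro n
  induction n with
  | zero =>
    intro j
    cases j with
    | zero => simp [stirling1, stirling2]
    | succ j =>
      have h1 : stirling2 (0 + 1) (j + 1 + 1) = 0 := s2_zero _ _ (by omega)
      have h2 : Nat.descFactorial 0 (j + 1) = 0 :=
        Nat.descFactorial_eq_zero_iff_lt.mpr (by omega)
      simp [h1, h2]
  | succ n ih =>
    intro j
    have e1 : ∀ l, stirling1 (n + 2) (l + 1) = (n + 1) * stirling1 (n + 1) (l + 1) + stirling1 (n + 1) l :=
      fun l => rfl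
    have key : (∑ l ∈ range (n + 2), stirling1 (n + 2) (l + 1) * stirling2 (l + 1) (j + 1))
        = (n + j + 2) * (∑ l ∈ range (n + 1), stirling1 (n + 1) (l + 1) * stirling2 (l + 1) (j + 1))
          + ∑ l ∈ range (n + 1), stirling1 (n + 1) (l + 1) * stirling2 (l + 1) j := by
      calc ∑ l ∈ range (n + 2), stirling1 (n + 2) (l + 1) * stirling2 (l + 1) (j + 1)
          = (n + 1) * (∑ l ∈ range (n + 2), stirling1 (n + 1) (l + 1) * stirling2 (l + 1) (j + 1))
            + ∑ l ∈ range (n + 2), stirling1 (n + 1) l * stirling2 (l + 1) (j + 1) := by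
            rw [Finset.mul_sum, ← Finset.sum_add_distrib]
            refine Finset.sum_congr rfl fun l _ => ?_
            rw [e1 l]; ring
        _ = (n + 1) * (∑ l ∈ range (n + 1), stirling1 (n + 1) (l + 1) * stirling2 (l + 1) (j + 1))
            + ∑ l ∈ range (n + 1), stirling1 (n + 1) (l + 1) * stirling2 (l + 2) (j + 1) := by
            rw [Finset.sum_range_succ (fun l => stirling1 (n + 1) (l + 1) * stirling2 (l + 1) (j + 1)),
              s1_zero (n + 1) (n + 2) (by omega),
              Finset.sum_range_succ' (fun l => stirling1 (n + 1) l * stirling2 (l + 1) (j + 1)),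
              s1_zero0]
            simp
        _ = _ := by
            have e2 : ∀ l : ℕ, stirling2 (l + 2) (j + 1) = (j + 1) * stirling2 (l + 1) (j + 1) + stirling2 (l + 1) j :=
              fun l => rfl
            have e3 : ∑ l ∈ range (n + 1), stirling1 (n + 1) (l + 1) * stirling2 (l + 2) (j + 1)
                = (j + 1) * (∑ l ∈ range (n + 1), stirling1 (n + 1) (l + 1) * stirling2 (l + 1) (j + 1))
                  + ∑ l ∈ range (n + 1), stirling1 (n + 1) (l + 1) * stirling2 (l + 1) j := by
              rw [Finset.mul_sum, ← Finset.sum_add_distrib]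
              refine Finset.sum_congr rfl fun l _ => ?_
              rw [e2 l]; ring
            rw [e3]; ring
    cases j with
    | zero =>
      have z : ∑ l ∈ range (n + 1), stirling1 (n + 1) (l + 1) * stirling2 (l + 1) 0 = 0 := by
        refine Finset.sum_eq_zero fun l _ => ?_
        rw [s2_zero0]; ring
      rw [key, z, add_zero]
      have ih0 := ih 0
      simp only [Nat.factorial_zero, one_pow, one_mul] at ih0 ⊢
      rw [ih0, Finset.sum_range_succ]
      have : ∀ m : ℕ, m.descFactorial 0 = 1 := fun m => rfl
      simp only [this] at *
      simp only [Finset.sum_const, Finset.card_range, smul_eq_mul, mul_one] at *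
      rw [Nat.factorial_succ]
      ring
    | succ j =>
      rw [key]
      have ihj1 := ih (j + 1)
      have ihj := ih j
      -- multiply ihj by (j+1)^2
      have hfac : (j + 1).factorial ^ 2 = (j + 1) ^ 2 * j.factorial ^ 2 := by
        rw [Nat.factorial_succ]; ring
      rw [Finset.sum_range_succ (fun m => m.descFactorial (j + 1)), Nat.factorial_succ (n)]
      -- target: (j+1)!^2 * ((n+j+3) * A + A') = (n+1)*n! * (D + (n+1)_{(j+1)})
      have hA : (j + 1).factorial ^ 2 *
          ∑ l ∈ range (n + 1), stirling1 (n + 1) (l + 1) * stirling2 (l + 1) (j + 1 + 1)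
          = n.factorial * ∑ m ∈ range (n + 1), m.descFactorial (j + 1) := ihj1
      have hA' : (j + 1).factorial ^ 2 *
          ∑ l ∈ range (n + 1), stirling1 (n + 1) (l + 1) * stirling2 (l + 1) (j + 1)
          = (j + 1) ^ 2 * (n.factorial * ∑ m ∈ range (n + 1), m.descFactorial j) := by
        rw [hfac, mul_assoc, ihj]
      have hk1 := hockey (j + 1) n
      have hk0 := hockey j n
      have hdm := desc_mul (n + 1) (j + 1)
      -- now pure arithmetic
      zify at hA hA' hk1 hk0 hdm ⊢
      linear_combination ((n:ℤ) + j + 3) * hA + hA' + (n.factorial : ℤ) * hk1 +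
        ((j:ℤ) + 1) * (n.factorial : ℤ) * hk0 - (n.factorial : ℤ) * hdm

lemma pow_eq (k m : ℕ) :
    ∑ j ∈ range (k + 1), stirling2 (k + 1) (j + 1) * m.descFactorial j = (m + 1) ^ k := by
  have h := s2_desc (k + 1) (m + 1)
  rw [Finset.sum_range_succ', s2_zero0] at h
  simp only [zero_mul, add_zero] at h
  have h2 : ∀ j, (m + 1).descFactorial (j + 1) = (m + 1) * m.descFactorial j :=
    fun j => Nat.succ_descFactorial_succ m j
  have h3 : (m + 1) * ∑ j ∈ range (k + 1), stirling2 (k + 1) (j + 1) * m.descFactorial j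
      = (m + 1) * (m + 1) ^ k := by
    rw [Finset.mul_sum, ← pow_succ']
    rw [← h]
    refine Finset.sum_congr rfl fun j _ => ?_
    rw [h2 j]; ring
  exact Nat.eq_of_mul_eq_mul_left (by omega) h3

theorem stmt9 (n k : ℕ) :
    ∑ l ∈ Finset.range (n + 1), stirling1 (n + 1) (l + 1) * polyBernoulli l k =
      n.factorial * ∑ i ∈ Finset.Icc 1 (n + 1), i ^ k := by
  have hpB : ∀ l, polyBernoulli l k =
      ∑ j ∈ range (k + 1),
        j.factorial ^ 2 * stirling2 (l + 1) (j + 1) * stirling2 (k + 1) (j + 1) := by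
    intro l
    unfold polyBernoulli
    apply Finset.sum_subset
    · intro j hj
      simp only [Finset.mem_range] at hj ⊢
      omega
    · intro j hj hj'
      simp only [Finset.mem_range] at hj hj'
      rw [s2_zero (l + 1) (j + 1) (by omega)]
      ring
  calc ∑ l ∈ range (n + 1), stirling1 (n + 1) (l + 1) * polyBernoulli l k
      = ∑ l ∈ range (n + 1), ∑ j ∈ range (k + 1),
          (j.factorial ^ 2 * stirling2 (k + 1) (j + 1)) *
            (stirling1 (n + 1) (l + 1) * stirling2 (l + 1) (j + 1)) := by
        refine Finset.sum_congr rfl fun l _ => ?_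
        rw [hpB l, Finset.mul_sum]
        exact Finset.sum_congr rfl fun j _ => by ring
    _ = ∑ j ∈ range (k + 1), stirling2 (k + 1) (j + 1) *
          (j.factorial ^ 2 *
            ∑ l ∈ range (n + 1), stirling1 (n + 1) (l + 1) * stirling2 (l + 1) (j + 1)) := by
        rw [Finset.sum_comm]
        refine Finset.sum_congr rfl fun j _ => ?_
        rw [Finset.mul_sum, Finset.mul_sum]
        exact Finset.sum_congr rfl fun l _ => by ring
    _ = ∑ j ∈ range (k + 1), stirling2 (k + 1) (j + 1) *
          (n.factorial * ∑ m ∈ range (n + 1), m.descFactorial j) := by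
        refine Finset.sum_congr rfl fun j _ => ?_
        rw [claimB n j]
    _ = ∑ j ∈ range (k + 1), ∑ m ∈ range (n + 1),
          n.factorial * (stirling2 (k + 1) (j + 1) * m.descFactorial j) := by
        refine Finset.sum_congr rfl fun j _ => ?_
        rw [Finset.mul_sum, Finset.mul_sum]
        exact Finset.sum_congr rfl fun m _ => by ring
    _ = ∑ m ∈ range (n + 1), ∑ j ∈ range (k + 1),
          n.factorial * (stirling2 (k + 1) (j + 1) * m.descFactorial j) := Finset.sum_comm
    _ = n.factorial * ∑ m ∈ range (n + 1), ∑ j ∈ range (k + 1),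
          stirling2 (k + 1) (j + 1) * m.descFactorial j := by
        rw [Finset.mul_sum]
        refine Finset.sum_congr rfl fun m _ => ?_
        rw [Finset.mul_sum]
    _ = n.factorial * ∑ m ∈ range (n + 1), (m + 1) ^ k := by
        congr 1
        exact Finset.sum_congr rfl fun m _ => pow_eq k m
    _ = n.factorial * ∑ i ∈ Finset.Icc 1 (n + 1), i ^ k := by
        congr 1
        rw [← Finset.Ico_add_one_right_eq_Icc, Finset.sum_Ico_eq_sum_range]
        simp [add_comm]
end
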